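/- (Exact reconstruction from the shifted grid) If g : ℝ^m → ℝ lies in H, then for every p ∈ ℝ^m and every θ ∈ ℝ^m, g(θ) = Σ_{q ∈ Q} g(p + q) · K̃(p + q, θ), where Q = {−2π/3, 0, 2π/3}^m. -/

import Mathlib

open MeasureTheory Real Finset

noncomputable section

/-- `Ω = {-1,0,1}^m` as a finite set of integer vectors. -/
def Omega (m : ℕ) : Finset (Fin m → ℤ) := Finset.Icc (-1) 1

/-- `ωᵀz = ∑ j, ω j * z j`. -/
def dotIZ {m : ℕ} (ω : Fin m → ℤ) (z : Fin m → ℝ) : ℝ := ∑ j, (ω j : ℝ) * z j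

/-- A function `g : ℝ^m → ℝ` lies in `H` if it has a Fourier representation with
frequencies in `Ω = {-1,0,1}^m` and coefficients satisfying `c (-ω) = conj (c ω)`. -/
def IsInH (m : ℕ) (g : (Fin m → ℝ) → ℝ) : Prop :=
  ∃ c : (Fin m → ℤ) → ℂ,
    (∀ ω ∈ Omega m, c (-ω) = starRingEnd ℂ (c ω)) ∧
    ∀ z : Fin m → ℝ, (g z : ℂ) =
      ∑ ω ∈ Omega m, c ω * Complex.exp (Complex.I * ((dotIZ ω z : ℝ) : ℂ))

/-- The kernel `K̃(x,z) = ∏ j, (1 + 2 cos (x j - z j)) / 3`. -/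
def Ktilde (m : ℕ) (x z : Fin m → ℝ) : ℝ :=
  ∏ j, (1 + 2 * Real.cos (x j - z j)) / 3

/-- The grid `Q = {-2π/3, 0, 2π/3}^m` as a finite set of real vectors. -/
def Qgrid (m : ℕ) : Finset (Fin m → ℝ) :=
  (Omega m).image (fun ω j => 2 * π / 3 * (ω j : ℝ))

/-- The set of points of `Q` having at most `L` non-zero entries. -/
def QgridL (m L : ℕ) : Finset (Fin m → ℝ) :=
  (Qgrid m).filter (fun q => (Finset.univ.filter (fun j => q j ≠ 0)).card ≤ L)

/-- The cube `[-π, π]^m`. -/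
def cube (m : ℕ) : Set (Fin m → ℝ) := Set.pi Set.univ fun _ : Fin m => Set.Icc (-π) π



def stmt5W : ℂ := Complex.exp (Complex.I * ((2*π/3 : ℝ) : ℂ))

lemma hW3 : stmt5W^3 = 1 := by
  rw [stmt5W, ← Complex.exp_nat_mul]
  rw [show (3:ℕ) * (Complex.I * ((2*π/3 : ℝ):ℂ)) = 2*π*Complex.I by push_cast; ring]
  exact Complex.exp_two_pi_mul_I

lemma hWne : stmt5W ≠ 1 := by
  rw [stmt5W]
  intro h
  have him : (Complex.exp (Complex.I * ((2*π/3 : ℝ):ℂ))).im = Real.sin (2*π/3) := by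
    rw [mul_comm]; exact Complex.exp_ofReal_mul_I_im _
  have hpos : 0 < Real.sin (2*π/3) := Real.sin_pos_of_pos_of_lt_pi (by positivity) (by nlinarith [pi_pos])
  rw [h] at him
  simp at him
  linarith [him ▸ hpos]

lemma hW : 1 + stmt5W + stmt5W^2 = 0 := by
  have h : (stmt5W - 1) * (1 + stmt5W + stmt5W^2) = 0 := by linear_combination hW3
  rcases mul_eq_zero.mp h with h' | h'
  · exact absurd (sub_eq_zero.mp h') hWne
  · exact h'

lemma hWinv : stmt5W⁻¹ = stmt5W^2 := by
  have h0 : stmt5W ≠ 0 := by rw [stmt5W]; exact Complex.exp_ne_zero _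
  field_simp
  linear_combination -hW3

lemma key (n : ℤ) (hn : n ∈ Finset.Icc (-1:ℤ) 1) (a b : ℝ) :
    ∑ k ∈ Finset.Icc (-1:ℤ) 1,
      Complex.exp (Complex.I * (((n : ℝ) * (a + 2*π/3*(k:ℝ)) : ℝ) : ℂ)) *
        ((((1 + 2*Real.cos (a + 2*π/3*(k:ℝ) - b))/3 : ℝ)) : ℂ)
      = Complex.exp (Complex.I * ((((n:ℝ) * b) : ℝ) : ℂ)) := by
  set A := Complex.exp (Complex.I * (a:ℂ)) with hAdef
  set B := Complex.exp (Complex.I * (b:ℂ)) with hBdef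
  have hA : A ≠ 0 := Complex.exp_ne_zero _
  have hB : B ≠ 0 := Complex.exp_ne_zero _
  have hW0 : stmt5W ≠ 0 := Complex.exp_ne_zero _
  have hE : ∀ (i j k : ℤ) (t : ℝ), (t : ℂ) = i*a + j*b + k*((2*π/3 : ℝ) : ℂ) →
      Complex.exp (Complex.I * (t : ℂ)) = A^i * B^j * stmt5W^k := by
    intro i j k t ht
    rw [ht, mul_add, mul_add, Complex.exp_add, Complex.exp_add]
    rw [show Complex.I * ((i:ℂ)*(a:ℂ)) = (i:ℂ) * (Complex.I * a) by ring,
        show Complex.I * ((j:ℂ)*(b:ℂ)) = (j:ℂ) * (Complex.I * b) by ring,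
        show Complex.I * ((k:ℂ)*((2*π/3:ℝ):ℂ)) = (k:ℂ) * (Complex.I * ((2*π/3:ℝ):ℂ)) by ring,
        Complex.exp_int_mul, Complex.exp_int_mul, Complex.exp_int_mul]
    rfl
  have hcos : ∀ t : ℝ, (((1 + 2*Real.cos t)/3 : ℝ) : ℂ) =
      (1 + Complex.exp (Complex.I * (t:ℂ)) + Complex.exp (Complex.I * ((-t : ℝ):ℂ)))/3 := by
    intro t
    have h2 := Complex.two_cos (t:ℂ)
    push_cast
    rw [show Complex.I * -(t:ℂ) = -(t:ℂ) * Complex.I by ring,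
        show Complex.I * (t:ℂ) = (t:ℂ) * Complex.I by ring]
    linear_combination h2/3
  rw [show Finset.Icc (-1:ℤ) 1 = {-1, 0, 1} by decide, Finset.sum_insert (by decide),
      Finset.sum_insert (by decide), Finset.sum_singleton]
  simp only [hcos]
  rw [Finset.mem_Icc] at hn
  obtain ⟨hn1, hn2⟩ := hn
  interval_cases n
  · rw [hE (-1) (0) (1) _ (by push_cast; ring),
        hE (1) (-1) (-1) _ (by push_cast; ring),
        hE (-1) (1) (1) _ (by push_cast; ring),
        hE (-1) (0) (0) _ (by push_cast; ring),
        hE (1) (-1) (0) _ (by push_cast; ring),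
        hE (-1) (1) (0) _ (by push_cast; ring),
        hE (-1) (0) (-1) _ (by push_cast; ring),
        hE (1) (-1) (1) _ (by push_cast; ring),
        hE (-1) (1) (-1) _ (by push_cast; ring),
        hE (0) (-1) (0) _ (by push_cast; ring)]
    simp only [zpow_neg, zpow_one, zpow_zero, hWinv]
    field_simp
    ring_nf
    linear_combination (A*B + B^2)*hW + (2*A^2 + B^2*stmt5W)*hW3
  · rw [hE (0) (0) (0) _ (by push_cast; ring),
        hE (1) (-1) (-1) _ (by push_cast; ring),
        hE (-1) (1) (1) _ (by push_cast; ring),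
        hE (0) (0) (0) _ (by push_cast; ring),
        hE (1) (-1) (0) _ (by push_cast; ring),
        hE (-1) (1) (0) _ (by push_cast; ring),
        hE (0) (0) (0) _ (by push_cast; ring),
        hE (1) (-1) (1) _ (by push_cast; ring),
        hE (-1) (1) (-1) _ (by push_cast; ring),
        hE (0) (0) (0) _ (by push_cast; ring)]
    simp only [zpow_neg, zpow_one, zpow_zero, hWinv]
    field_simp
    ring_nf
    linear_combination (A^2 + B^2)*hW
  · rw [hE (1) (0) (-1) _ (by push_cast; ring),
        hE (1) (-1) (-1) _ (by push_cast; ring),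
        hE (-1) (1) (1) _ (by push_cast; ring),
        hE (1) (0) (0) _ (by push_cast; ring),
        hE (1) (-1) (0) _ (by push_cast; ring),
        hE (-1) (1) (0) _ (by push_cast; ring),
        hE (1) (0) (1) _ (by push_cast; ring),
        hE (1) (-1) (1) _ (by push_cast; ring),
        hE (-1) (1) (-1) _ (by push_cast; ring),
        hE (0) (1) (0) _ (by push_cast; ring)]
    simp only [zpow_neg, zpow_one, zpow_zero, hWinv]
    field_simp
    ring_nf
    linear_combination (A*B + A^2)*hW + (2*B^2 + A^2*stmt5W)*hW3

set_option maxHeartbeats 1000000 in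
lemma innerSum5 (m : ℕ) (ω : Fin m → ℤ) (hω : ω ∈ Omega m) (p θ : Fin m → ℝ) :
    ∑ ν ∈ Omega m,
      Complex.exp (Complex.I * ((dotIZ ω (p + fun j => 2 * π / 3 * (ν j : ℝ)) : ℝ) : ℂ)) *
        ((Ktilde m (p + fun j => 2 * π / 3 * (ν j : ℝ)) θ : ℝ) : ℂ)
      = Complex.exp (Complex.I * ((dotIZ ω θ : ℝ) : ℂ)) := by
  have hωj : ∀ j, ω j ∈ Finset.Icc (-1:ℤ) 1 := by
    intro j
    rw [Omega, Finset.mem_Icc] at hω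
    exact Finset.mem_Icc.mpr ⟨hω.1 j, hω.2 j⟩
  have hterm : ∀ ν : Fin m → ℤ,
      Complex.exp (Complex.I * ((dotIZ ω (p + fun j => 2 * π / 3 * (ν j : ℝ)) : ℝ) : ℂ)) *
        ((Ktilde m (p + fun j => 2 * π / 3 * (ν j : ℝ)) θ : ℝ) : ℂ)
      = ∏ j, (Complex.exp (Complex.I * ((((ω j : ℝ) * (p j + 2*π/3*((ν j : ℤ):ℝ)) : ℝ)) : ℂ)) *
          ((((1 + 2*Real.cos (p j + 2*π/3*((ν j : ℤ):ℝ) - θ j))/3 : ℝ)) : ℂ)) := by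
    intro ν
    rw [Finset.prod_mul_distrib]
    congr 1
    · rw [dotIZ]
      push_cast
      rw [Finset.mul_sum, Complex.exp_sum]
      apply Finset.prod_congr rfl
      intro j _
      congr 1
      simp only [Pi.add_apply]
      push_cast
      ring
    · rw [Ktilde]
      push_cast
      apply Finset.prod_congr rfl
      intro j _
      norm_num [Pi.add_apply]
  calc ∑ ν ∈ Omega m,
      Complex.exp (Complex.I * ((dotIZ ω (p + fun j => 2 * π / 3 * (ν j : ℝ)) : ℝ) : ℂ)) *
        ((Ktilde m (p + fun j => 2 * π / 3 * (ν j : ℝ)) θ : ℝ) : ℂ)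
      = ∑ ν ∈ Fintype.piFinset (fun _ : Fin m => Finset.Icc (-1:ℤ) 1),
          ∏ j, (Complex.exp (Complex.I * ((((ω j : ℝ) * (p j + 2*π/3*((ν j : ℤ):ℝ)) : ℝ)) : ℂ)) *
          ((((1 + 2*Real.cos (p j + 2*π/3*((ν j : ℤ):ℝ) - θ j))/3 : ℝ)) : ℂ)) := by
        rw [Omega, Pi.Icc_eq]
        exact Finset.sum_congr rfl fun ν _ => hterm ν
    _ = ∏ j, ∑ k ∈ Finset.Icc (-1:ℤ) 1,
          (Complex.exp (Complex.I * ((((ω j : ℝ) * (p j + 2*π/3*((k : ℤ):ℝ)) : ℝ)) : ℂ)) *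
          ((((1 + 2*Real.cos (p j + 2*π/3*((k : ℤ):ℝ) - θ j))/3 : ℝ)) : ℂ)) :=
        by rw [Finset.prod_univ_sum]
    _ = ∏ j, Complex.exp (Complex.I * ((((ω j : ℝ) * θ j) : ℝ) : ℂ)) :=
        Finset.prod_congr rfl fun j _ => key (ω j) (hωj j) (p j) (θ j)
    _ = Complex.exp (Complex.I * ((dotIZ ω θ : ℝ) : ℂ)) := by
        rw [dotIZ]
        push_cast
        rw [Finset.mul_sum, Complex.exp_sum]

theorem stmt_5 (m : ℕ) (hm : 0 < m) (g : (Fin m → ℝ) → ℝ) (hg : IsInH m g)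
    (p θ : Fin m → ℝ) :
    g θ = ∑ q ∈ Qgrid m, g (p + q) * Ktilde m (p + q) θ := by
  obtain ⟨c, -, hrep⟩ := hg
  have hinj : ∀ x ∈ Omega m, ∀ y ∈ Omega m,
      (fun ω : Fin m → ℤ => fun j => 2 * π / 3 * (ω j : ℝ)) x =
      (fun ω : Fin m → ℤ => fun j => 2 * π / 3 * (ω j : ℝ)) y → x = y := by
    intro x _ y _ h
    funext j
    have := congrFun h j
    have h23 : (2 * π / 3 : ℝ) ≠ 0 := by positivity
    exact_mod_cast mul_left_cancel₀ h23 this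
  have hC : ((g θ : ℝ) : ℂ) = ∑ q ∈ Qgrid m, ((g (p + q) : ℝ) : ℂ) * ((Ktilde m (p + q) θ : ℝ) : ℂ) := by
    rw [Qgrid, Finset.sum_image hinj]
    symm
    calc ∑ ν ∈ Omega m, ((g (p + fun j => 2 * π / 3 * (ν j : ℝ)) : ℝ) : ℂ) *
            ((Ktilde m (p + fun j => 2 * π / 3 * (ν j : ℝ)) θ : ℝ) : ℂ)
        = ∑ ν ∈ Omega m, ∑ ω ∈ Omega m, c ω *
            (Complex.exp (Complex.I * ((dotIZ ω (p + fun j => 2 * π / 3 * (ν j : ℝ)) : ℝ) : ℂ)) *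
              ((Ktilde m (p + fun j => 2 * π / 3 * (ν j : ℝ)) θ : ℝ) : ℂ)) := by
          refine Finset.sum_congr rfl fun ν _ => ?_
          rw [hrep, Finset.sum_mul]
          exact Finset.sum_congr rfl fun ω _ => by ring
      _ = ∑ ω ∈ Omega m, c ω * ∑ ν ∈ Omega m,
            (Complex.exp (Complex.I * ((dotIZ ω (p + fun j => 2 * π / 3 * (ν j : ℝ)) : ℝ) : ℂ)) *
              ((Ktilde m (p + fun j => 2 * π / 3 * (ν j : ℝ)) θ : ℝ) : ℂ)) := by
          rw [Finset.sum_comm]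
          exact Finset.sum_congr rfl fun ω _ => by rw [Finset.mul_sum]
      _ = ∑ ω ∈ Omega m, c ω * Complex.exp (Complex.I * ((dotIZ ω θ : ℝ) : ℂ)) := by
          refine Finset.sum_congr rfl fun ω hω => ?_
          rw [innerSum5 m ω hω p θ]
      _ = ((g θ : ℝ) : ℂ) := (hrep θ).symm
  exact_mod_cast hC
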